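/- Blend-then-predict lower bound for a fixed partition (core of Proposition 1 of the paper): Let Ω₁, Ω₂, Ω₃, Ω₄ be nonempty finite types and let p be a probability mass function on Ω₁ × Ω₂ × Ω₃ × Ω₄, the joint distribution of (A₁, A₂, B₁, B₂). Let q₁ be a conditional model for A₂ given (A₁,B₂) (q₁(a₁,b₂,a₂) ≥ 0, ∑_{a₂} q₁(a₁,b₂,a₂) = 1 whenever the (A₁,B₂)-marginal is positive at (a₁,b₂)) and q₂ a conditional model for B₁ given (A₁,B₂) (analogous conditions), with q₁ and q₂ strictly positive at every point of positive joint probability. Then ∑_{(a₁,a₂,b₁,b₂) : p > 0} p(a₁,a₂,b₁,b₂) · ( log q₁(a₁,b₂,a₂) + log q₂(a₁,b₂,b₁) ) ≤ I(A₂;(A₁,B₂)) + I(B₁;(A₁,B₂)); i.e. the blend-then-predict training objective is a lower bound on the sum of mutual informations between each recovered part and the blended input. -/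

import Mathlib

/-- Shannon entropy of a distribution `q` on a finite type, with natural log
and the convention `0 * log 0 = 0` (automatic since `Real.log 0 = 0`). -/
noncomputable def entropy {Ω : Type*} [Fintype Ω] (q : Ω → ℝ) : ℝ :=
  -∑ x, q x * Real.log (q x)

section Marginals

variable {Ω₁ Ω₂ Ω₃ Ω₄ : Type*} [Fintype Ω₁] [Fintype Ω₂] [Fintype Ω₃] [Fintype Ω₄]

/-- `H(A₁)` for a joint pmf `p` of `(A₁, A₂, B₁, B₂)`. -/
noncomputable def HA1 (p : Ω₁ × Ω₂ × Ω₃ × Ω₄ → ℝ) : ℝ :=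
  entropy (fun a₁ : Ω₁ => ∑ a₂, ∑ b₁, ∑ b₂, p (a₁, a₂, b₁, b₂))

/-- `H(A₂)` for a joint pmf `p` of `(A₁, A₂, B₁, B₂)`. -/
noncomputable def HA2 (p : Ω₁ × Ω₂ × Ω₃ × Ω₄ → ℝ) : ℝ :=
  entropy (fun a₂ : Ω₂ => ∑ a₁, ∑ b₁, ∑ b₂, p (a₁, a₂, b₁, b₂))

/-- `H(B₁)` for a joint pmf `p` of `(A₁, A₂, B₁, B₂)`. -/
noncomputable def HB1 (p : Ω₁ × Ω₂ × Ω₃ × Ω₄ → ℝ) : ℝ :=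
  entropy (fun b₁ : Ω₃ => ∑ a₁, ∑ a₂, ∑ b₂, p (a₁, a₂, b₁, b₂))

/-- `H(B₂)` for a joint pmf `p` of `(A₁, A₂, B₁, B₂)`. -/
noncomputable def HB2 (p : Ω₁ × Ω₂ × Ω₃ × Ω₄ → ℝ) : ℝ :=
  entropy (fun b₂ : Ω₄ => ∑ a₁, ∑ a₂, ∑ b₁, p (a₁, a₂, b₁, b₂))

/-- `H(A₁,A₂)` for a joint pmf `p` of `(A₁, A₂, B₁, B₂)`. -/
noncomputable def HA1A2 (p : Ω₁ × Ω₂ × Ω₃ × Ω₄ → ℝ) : ℝ :=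
  entropy (fun w : Ω₁ × Ω₂ => ∑ b₁, ∑ b₂, p (w.1, w.2, b₁, b₂))

/-- `H(A₁,B₁)` for a joint pmf `p` of `(A₁, A₂, B₁, B₂)`. -/
noncomputable def HA1B1 (p : Ω₁ × Ω₂ × Ω₃ × Ω₄ → ℝ) : ℝ :=
  entropy (fun w : Ω₁ × Ω₃ => ∑ a₂, ∑ b₂, p (w.1, a₂, w.2, b₂))

/-- `H(A₁,B₂)` for a joint pmf `p` of `(A₁, A₂, B₁, B₂)`. -/
noncomputable def HA1B2 (p : Ω₁ × Ω₂ × Ω₃ × Ω₄ → ℝ) : ℝ :=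
  entropy (fun w : Ω₁ × Ω₄ => ∑ a₂, ∑ b₁, p (w.1, a₂, b₁, w.2))

/-- `H(A₂,B₂)` for a joint pmf `p` of `(A₁, A₂, B₁, B₂)`. -/
noncomputable def HA2B2 (p : Ω₁ × Ω₂ × Ω₃ × Ω₄ → ℝ) : ℝ :=
  entropy (fun w : Ω₂ × Ω₄ => ∑ a₁, ∑ b₁, p (a₁, w.1, b₁, w.2))

/-- `H(B₁,B₂)` for a joint pmf `p` of `(A₁, A₂, B₁, B₂)`. -/
noncomputable def HB1B2 (p : Ω₁ × Ω₂ × Ω₃ × Ω₄ → ℝ) : ℝ :=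
  entropy (fun w : Ω₃ × Ω₄ => ∑ a₁, ∑ a₂, p (a₁, a₂, w.1, w.2))

/-- `H(A₁,A₂,B₂)` for a joint pmf `p` of `(A₁, A₂, B₁, B₂)`. -/
noncomputable def HA1A2B2 (p : Ω₁ × Ω₂ × Ω₃ × Ω₄ → ℝ) : ℝ :=
  entropy (fun w : Ω₁ × Ω₂ × Ω₄ => ∑ b₁, p (w.1, w.2.1, b₁, w.2.2))

/-- `H(A₁,B₁,B₂)` for a joint pmf `p` of `(A₁, A₂, B₁, B₂)`. -/
noncomputable def HA1B1B2 (p : Ω₁ × Ω₂ × Ω₃ × Ω₄ → ℝ) : ℝ :=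
  entropy (fun w : Ω₁ × Ω₃ × Ω₄ => ∑ a₂, p (w.1, a₂, w.2.1, w.2.2))

end Marginals

private lemma entropy_nonneg_aux {Ω : Type*} [Fintype Ω] (q : Ω → ℝ)
    (h0 : ∀ x, 0 ≤ q x) (h1 : ∑ x, q x = 1) :
    0 ≤ entropy q := by
  have : ∑ x, q x * Real.log (q x) ≤ 0 := by
    apply Finset.sum_nonpos
    intro x _
    have hle1 : q x ≤ 1 := by
      rw [← h1]
      exact Finset.single_le_sum (fun i _ => h0 i) (Finset.mem_univ x)
    exact mul_nonpos_of_nonneg_of_nonpos (h0 x) (Real.log_nonpos (h0 x) hle1)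
  simp only [entropy]
  linarith

private lemma reorder_a2_aux {Ω₁ Ω₂ Ω₃ Ω₄ : Type*} [Fintype Ω₁] [Fintype Ω₂] [Fintype Ω₃]
    [Fintype Ω₄] (f : Ω₁ → Ω₂ → Ω₃ → Ω₄ → ℝ) :
    ∑ a₂, ∑ a₁, ∑ b₂, ∑ b₁, f a₁ a₂ b₁ b₂ = ∑ a₁, ∑ a₂, ∑ b₁, ∑ b₂, f a₁ a₂ b₁ b₂ := by
  rw [Finset.sum_comm]
  exact Finset.sum_congr rfl fun a₁ _ => Finset.sum_congr rfl fun a₂ _ => Finset.sum_comm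

private lemma reorder_b1_aux {Ω₁ Ω₂ Ω₃ Ω₄ : Type*} [Fintype Ω₁] [Fintype Ω₂] [Fintype Ω₃]
    [Fintype Ω₄] (f : Ω₁ → Ω₂ → Ω₃ → Ω₄ → ℝ) :
    ∑ b₁, ∑ a₁, ∑ b₂, ∑ a₂, f a₁ a₂ b₁ b₂ = ∑ a₁, ∑ a₂, ∑ b₁, ∑ b₂, f a₁ a₂ b₁ b₂ := by
  rw [Finset.sum_comm]
  refine Finset.sum_congr rfl fun a₁ _ => ?_
  calc ∑ b₁, ∑ b₂, ∑ a₂, f a₁ a₂ b₁ b₂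
      = ∑ b₁, ∑ a₂, ∑ b₂, f a₁ a₂ b₁ b₂ :=
        Finset.sum_congr rfl fun b₁ _ => Finset.sum_comm
    _ = ∑ a₂, ∑ b₁, ∑ b₂, f a₁ a₂ b₁ b₂ := Finset.sum_comm

private lemma gibbs_aux {X Y R : Type*} [Fintype X] [Fintype Y] [Fintype R]
    (P : X → Y → R → ℝ) (hP : ∀ x y r, 0 ≤ P x y r)
    (hPs : ∑ x, ∑ y, ∑ r, P x y r = 1)
    (q : Y → X → ℝ) (hq : ∀ y x, 0 ≤ q y x)
    (hqs : ∀ y, 0 < (∑ x, ∑ r, P x y r) → ∑ x, q y x = 1)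
    (hqpos : ∀ x y r, 0 < P x y r → 0 < q y x) :
    ∑ x, ∑ y, ∑ r, P x y r * Real.log (q y x)
      ≤ (∑ x, ∑ y, (∑ r, P x y r) * Real.log (∑ r, P x y r))
        - ∑ y, (∑ x, ∑ r, P x y r) * Real.log (∑ x, ∑ r, P x y r) := by
  set m3 : X → Y → ℝ := fun x y => ∑ r, P x y r with hm3def
  set m2 : Y → ℝ := fun y => ∑ x, m3 x y with hm2def
  have hm3nn : ∀ x y, 0 ≤ m3 x y := fun x y => Finset.sum_nonneg fun r _ => hP x y r
  have hm2nn : ∀ y, 0 ≤ m2 y := fun y => Finset.sum_nonneg fun x _ => hm3nn x y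
  have hm2sum : ∑ y, m2 y = 1 := by rw [← hPs]; exact Finset.sum_comm
  have hPs' : ∑ x, ∑ y, ∑ r, P x y r = (1:ℝ) := hPs
  -- rewrite RHS as triple sums
  have hR1 : (∑ x, ∑ y, m3 x y * Real.log (m3 x y))
      = ∑ x, ∑ y, ∑ r, P x y r * Real.log (m3 x y) := by
    congr 1 with x; congr 1 with y; rw [← Finset.sum_mul]
  have hR2 : ∑ y, m2 y * Real.log (m2 y) = ∑ x, ∑ y, ∑ r, P x y r * Real.log (m2 y) := by
    rw [Finset.sum_comm]
    congr 1 with y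
    simp_rw [← Finset.sum_mul]
    rfl
  rw [hR1, hR2]
  have expand : (∑ x, ∑ y, ∑ r,
      (P x y r * Real.log (q y x)
        - (P x y r * Real.log (m3 x y) - P x y r * Real.log (m2 y))))
      = (∑ x, ∑ y, ∑ r, P x y r * Real.log (q y x))
        - ((∑ x, ∑ y, ∑ r, P x y r * Real.log (m3 x y))
          - ∑ x, ∑ y, ∑ r, P x y r * Real.log (m2 y)) := by
    simp_rw [Finset.sum_sub_distrib]
  have key : ∀ x y r, P x y r * Real.log (q y x)
      - (P x y r * Real.log (m3 x y) - P x y r * Real.log (m2 y))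
      ≤ P x y r * q y x * m2 y / m3 x y - P x y r := by
    intro x y r
    rcases (hP x y r).lt_or_eq with h | h
    · have hq' := hqpos x y r h
      have hm3 : 0 < m3 x y :=
        lt_of_lt_of_le h (Finset.single_le_sum (fun i _ => hP x y i) (Finset.mem_univ r))
      have hm2 : 0 < m2 y :=
        lt_of_lt_of_le hm3 (Finset.single_le_sum (fun i _ => hm3nn i y) (Finset.mem_univ x))
      have hpos : 0 < q y x * m2 y / m3 x y := by positivity
      have hlog := Real.log_le_sub_one_of_pos hpos
      have heq : Real.log (q y x * m2 y / m3 x y)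
          = Real.log (q y x) - Real.log (m3 x y) + Real.log (m2 y) := by
        rw [Real.log_div (by positivity) hm3.ne', Real.log_mul hq'.ne' hm2.ne']; ring
      rw [heq] at hlog
      have h2 : P x y r * (Real.log (q y x) - Real.log (m3 x y) + Real.log (m2 y))
          ≤ P x y r * (q y x * m2 y / m3 x y - 1) :=
        mul_le_mul_of_nonneg_left hlog h.le
      have h3 : P x y r * (q y x * m2 y / m3 x y - 1)
          = P x y r * q y x * m2 y / m3 x y - P x y r := by
        field_simp
      linarith [h2, h3.symm.le]
    · rw [← h]; simp
  have step1 : ∑ x, ∑ y, ∑ r,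
      (P x y r * Real.log (q y x)
        - (P x y r * Real.log (m3 x y) - P x y r * Real.log (m2 y)))
      ≤ ∑ x, ∑ y, ∑ r, (P x y r * q y x * m2 y / m3 x y - P x y r) := by
    apply Finset.sum_le_sum; intro x _
    apply Finset.sum_le_sum; intro y _
    apply Finset.sum_le_sum; intro r _
    exact key x y r
  rw [← sub_nonpos, ← expand]
  refine le_trans step1 ?_
  have step2 : ∑ x, ∑ y, ∑ r, (P x y r * q y x * m2 y / m3 x y - P x y r)
      = (∑ x, ∑ y, ∑ r, P x y r * q y x * m2 y / m3 x y) - 1 := by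
    simp_rw [Finset.sum_sub_distrib]
    rw [hPs]
  rw [step2]
  have step3 : ∀ x y, (∑ r, P x y r * q y x * m2 y / m3 x y) ≤ q y x * m2 y := by
    intro x y
    have : (∑ r, P x y r * q y x * m2 y / m3 x y) = m3 x y * q y x * m2 y / m3 x y := by
      simp_rw [div_eq_mul_inv]
      rw [show ∀ g : R → ℝ, (∑ r, g r) = (∑ r, g r) from fun _ => rfl]
      rw [← Finset.sum_mul, ← Finset.sum_mul, ← Finset.sum_mul]
    rw [this]
    rcases (hm3nn x y).lt_or_eq with h | h
    · have : m3 x y * q y x * m2 y / m3 x y = q y x * m2 y := by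
        field_simp
      rw [this]
    · rw [← h]; simp [mul_nonneg (hq y x) (hm2nn y)]
  have step4 : (∑ x, ∑ y, ∑ r, P x y r * q y x * m2 y / m3 x y) ≤ ∑ x, ∑ y, q y x * m2 y := by
    apply Finset.sum_le_sum; intro x _
    apply Finset.sum_le_sum; intro y _
    exact step3 x y
  have step5 : ∑ x, ∑ y, q y x * m2 y = 1 := by
    rw [Finset.sum_comm, ← hm2sum]
    congr 1 with y
    rw [← Finset.sum_mul]
    rcases (hm2nn y).lt_or_eq with h | h
    · rw [hqs y h, one_mul]
    · rw [← h, mul_zero]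
  linarith

/-- Blend-then-predict lower bound for a fixed partition (core of
Proposition 1): for a joint pmf `p` of `(A₁, A₂, B₁, B₂)` on finite types, a
conditional model `q₁` for `A₂` given `(A₁,B₂)` and a conditional model `q₂`
for `B₁` given `(A₁,B₂)` (nonnegative, normalized wherever the `(A₁,B₂)`-
marginal is positive, and strictly positive at every point of positive joint
probability), the blend-then-predict objective is a lower bound on
`I(A₂;(A₁,B₂)) + I(B₁;(A₁,B₂))`, where `I(X;Y) = H(X) + H(Y) - H(X,Y)` and
marginals are obtained by summing `p`. -/
theorem blend_then_predict_lower_bound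
    {Ω₁ Ω₂ Ω₃ Ω₄ : Type*} [Fintype Ω₁] [Fintype Ω₂] [Fintype Ω₃] [Fintype Ω₄]
    [Nonempty Ω₁] [Nonempty Ω₂] [Nonempty Ω₃] [Nonempty Ω₄]
    (p : Ω₁ × Ω₂ × Ω₃ × Ω₄ → ℝ)
    (hp : ∀ z, 0 ≤ p z) (hps : ∑ z, p z = 1)
    (q₁ : Ω₁ → Ω₄ → Ω₂ → ℝ) (q₂ : Ω₁ → Ω₄ → Ω₃ → ℝ)
    (hq₁ : ∀ a₁ b₂ a₂, 0 ≤ q₁ a₁ b₂ a₂)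
    (hq₁sum : ∀ a₁ b₂, 0 < (∑ a₂, ∑ b₁, p (a₁, a₂, b₁, b₂)) →
      ∑ a₂, q₁ a₁ b₂ a₂ = 1)
    (hq₁pos : ∀ a₁ a₂ b₁ b₂, 0 < p (a₁, a₂, b₁, b₂) → 0 < q₁ a₁ b₂ a₂)
    (hq₂ : ∀ a₁ b₂ b₁, 0 ≤ q₂ a₁ b₂ b₁)
    (hq₂sum : ∀ a₁ b₂, 0 < (∑ a₂, ∑ b₁, p (a₁, a₂, b₁, b₂)) →
      ∑ b₁, q₂ a₁ b₂ b₁ = 1)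
    (hq₂pos : ∀ a₁ a₂ b₁ b₂, 0 < p (a₁, a₂, b₁, b₂) → 0 < q₂ a₁ b₂ b₁) :
    ∑ z ∈ Finset.univ.filter (fun z => 0 < p z),
        p z * (Real.log (q₁ z.1 z.2.2.2 z.2.1) + Real.log (q₂ z.1 z.2.2.2 z.2.2.1))
      ≤
      -- I(A₂;(A₁,B₂)) + I(B₁;(A₁,B₂))
      (HA2 p + HA1B2 p - HA1A2B2 p) + (HB1 p + HA1B2 p - HA1B1B2 p) := by
  classical
  have hfull : ∑ z ∈ Finset.univ.filter (fun z => 0 < p z),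
      p z * (Real.log (q₁ z.1 z.2.2.2 z.2.1) + Real.log (q₂ z.1 z.2.2.2 z.2.2.1))
      = ∑ z, p z * (Real.log (q₁ z.1 z.2.2.2 z.2.1) + Real.log (q₂ z.1 z.2.2.2 z.2.2.1)) := by
    apply Finset.sum_filter_of_ne
    intro z _ hz
    rcases (hp z).lt_or_eq with h | h
    · exact h
    · exfalso; apply hz; rw [← h, zero_mul]
  rw [hfull]
  simp_rw [mul_add]
  rw [Finset.sum_add_distrib]
  have hps4 : ∑ a₁, ∑ a₂, ∑ b₁, ∑ b₂, p (a₁, a₂, b₁, b₂) = 1 := by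
    rw [← hps]; simp [Fintype.sum_prod_type]
  -- First Gibbs bound, for q₁ (predicting A₂ from (A₁,B₂))
  have G1 := gibbs_aux (fun (a₂ : Ω₂) (y : Ω₁ × Ω₄) (b₁ : Ω₃) => p (y.1, a₂, b₁, y.2))
    (fun a₂ y b₁ => hp _)
    (by
      simp_rw [Fintype.sum_prod_type]
      rw [reorder_a2_aux (fun a₁ a₂ b₁ b₂ => p (a₁, a₂, b₁, b₂))]
      exact hps4)
    (fun (y : Ω₁ × Ω₄) a₂ => q₁ y.1 y.2 a₂)
    (fun y a₂ => hq₁ y.1 y.2 a₂)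
    (by rintro ⟨a₁, b₂⟩ h; exact hq₁sum a₁ b₂ h)
    (fun a₂ y b₁ h => hq₁pos y.1 a₂ b₁ y.2 h)
  have e1 : ∑ z : Ω₁ × Ω₂ × Ω₃ × Ω₄, p z * Real.log (q₁ z.1 z.2.2.2 z.2.1)
      = ∑ a₂, ∑ y : Ω₁ × Ω₄, ∑ b₁, p (y.1, a₂, b₁, y.2) * Real.log (q₁ y.1 y.2 a₂) := by
    simp_rw [Fintype.sum_prod_type]
    exact (reorder_a2_aux (fun a₁ a₂ b₁ b₂ => p (a₁, a₂, b₁, b₂) * Real.log (q₁ a₁ b₂ a₂))).symm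
  have e2 : ∑ a₂, ∑ y : Ω₁ × Ω₄, (∑ b₁, p (y.1, a₂, b₁, y.2))
        * Real.log (∑ b₁, p (y.1, a₂, b₁, y.2)) = -HA1A2B2 p := by
    simp only [HA1A2B2, entropy, neg_neg]
    simp_rw [Fintype.sum_prod_type]
    exact Finset.sum_comm
  have e3 : ∑ y : Ω₁ × Ω₄, (∑ a₂, ∑ b₁, p (y.1, a₂, b₁, y.2))
        * Real.log (∑ a₂, ∑ b₁, p (y.1, a₂, b₁, y.2)) = -HA1B2 p := by
    simp only [HA1B2, entropy, neg_neg]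
  have hHA2 : 0 ≤ HA2 p := by
    apply entropy_nonneg_aux
    · intro a₂
      exact Finset.sum_nonneg fun _ _ => Finset.sum_nonneg fun _ _ =>
        Finset.sum_nonneg fun _ _ => hp _
    · rw [Finset.sum_comm]; exact hps4
  have bound1 : ∑ z : Ω₁ × Ω₂ × Ω₃ × Ω₄, p z * Real.log (q₁ z.1 z.2.2.2 z.2.1)
      ≤ HA2 p + HA1B2 p - HA1A2B2 p := by
    rw [e1]
    refine le_trans G1 ?_
    rw [e2, e3]
    linarith
  -- Second Gibbs bound, for q₂ (predicting B₁ from (A₁,B₂))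
  have G2 := gibbs_aux (fun (b₁ : Ω₃) (y : Ω₁ × Ω₄) (a₂ : Ω₂) => p (y.1, a₂, b₁, y.2))
    (fun b₁ y a₂ => hp _)
    (by
      simp_rw [Fintype.sum_prod_type]
      rw [reorder_b1_aux (fun a₁ a₂ b₁ b₂ => p (a₁, a₂, b₁, b₂))]
      exact hps4)
    (fun (y : Ω₁ × Ω₄) b₁ => q₂ y.1 y.2 b₁)
    (fun y b₁ => hq₂ y.1 y.2 b₁)
    (by
      rintro ⟨a₁, b₂⟩ h
      refine hq₂sum a₁ b₂ ?_
      have hsw : (∑ b₁, ∑ a₂, p (a₁, a₂, b₁, b₂)) = ∑ a₂, ∑ b₁, p (a₁, a₂, b₁, b₂) :=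
        Finset.sum_comm
      rw [← hsw]
      exact h)
    (fun b₁ y a₂ h => hq₂pos y.1 a₂ b₁ y.2 h)
  have e1' : ∑ z : Ω₁ × Ω₂ × Ω₃ × Ω₄, p z * Real.log (q₂ z.1 z.2.2.2 z.2.2.1)
      = ∑ b₁, ∑ y : Ω₁ × Ω₄, ∑ a₂, p (y.1, a₂, b₁, y.2) * Real.log (q₂ y.1 y.2 b₁) := by
    simp_rw [Fintype.sum_prod_type]
    exact (reorder_b1_aux (fun a₁ a₂ b₁ b₂ => p (a₁, a₂, b₁, b₂) * Real.log (q₂ a₁ b₂ b₁))).symm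
  have e2' : ∑ b₁, ∑ y : Ω₁ × Ω₄, (∑ a₂, p (y.1, a₂, b₁, y.2))
        * Real.log (∑ a₂, p (y.1, a₂, b₁, y.2)) = -HA1B1B2 p := by
    simp only [HA1B1B2, entropy, neg_neg]
    simp_rw [Fintype.sum_prod_type]
    exact Finset.sum_comm
  have e3' : ∑ y : Ω₁ × Ω₄, (∑ b₁, ∑ a₂, p (y.1, a₂, b₁, y.2))
        * Real.log (∑ b₁, ∑ a₂, p (y.1, a₂, b₁, y.2)) = -HA1B2 p := by
    have hswap : ∀ y : Ω₁ × Ω₄, (∑ b₁, ∑ a₂, p (y.1, a₂, b₁, y.2))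
        = ∑ a₂, ∑ b₁, p (y.1, a₂, b₁, y.2) := fun y => Finset.sum_comm
    simp_rw [hswap]
    simp only [HA1B2, entropy, neg_neg]
  have hHB1 : 0 ≤ HB1 p := by
    apply entropy_nonneg_aux
    · intro b₁
      exact Finset.sum_nonneg fun _ _ => Finset.sum_nonneg fun _ _ =>
        Finset.sum_nonneg fun _ _ => hp _
    · calc ∑ b₁, ∑ a₁, ∑ a₂, ∑ b₂, p (a₁, a₂, b₁, b₂)
          = ∑ a₁, ∑ b₁, ∑ a₂, ∑ b₂, p (a₁, a₂, b₁, b₂) := Finset.sum_comm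
        _ = ∑ a₁, ∑ a₂, ∑ b₁, ∑ b₂, p (a₁, a₂, b₁, b₂) :=
            Finset.sum_congr rfl fun _ _ => Finset.sum_comm
        _ = 1 := hps4
  have bound2 : ∑ z : Ω₁ × Ω₂ × Ω₃ × Ω₄, p z * Real.log (q₂ z.1 z.2.2.2 z.2.2.1)
      ≤ HB1 p + HA1B2 p - HA1B1B2 p := by
    rw [e1']
    refine le_trans G2 ?_
    rw [e2', e3']
    linarith
  linarith
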